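/- arXiv:2504.05903 — 5 statements merged into one kernel-verified Lean document; each statement's English description precedes it below -/
import Mathlib

section
/- Let (X, {*^g}_{g∈G}) be a G-family of racks. Define on X × G the operations (x,g) * (y,h) = (x *^h y, h⁻¹gh) and (x,g)(x,h) = (x,gh) (group multiplication within each fiber {x} × G). Then X × G is a multiple group rack: (i) z * (ab) = (z * a) * b and z * (x, e) = z for a,b in the same fiber; (ii) (z * w) * v = (z * v) * (w * v) for all z,w,v; (iii) for each fiber {x} × G and each element v, the map a ↦ a * v sends {x} × G into a single fiber and is a group homomorphism, i.e., (ab) * v = (a * v)(b * v). -/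
/-- The associated multiple group rack `X × G` of a `G`-family of
racks, with `(x,g) * (y,h) = (x *^h y, h⁻¹gh)` and fiberwise multiplication
`(x,g)(x,h) = (x,gh)`, satisfies the three multiple group rack axioms. -/
theorem associated_multiple_group_rack
    (G : Type*) [Group G] (X : Type*) (star : G → X → X → X)
    (h1 : ∀ (g h : G) (x y : X), star (g * h) x y = star h (star g x y) y)
    (h2 : ∀ (x y : X), star 1 x y = x)
    (h3 : ∀ (g h : G) (x y z : X),
      star h (star g x y) z = star (h⁻¹ * g * h) (star h x z) (star h y z)) :
    -- the operation on X × G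
    ∀ ast : X × G → X × G → X × G,
      (∀ u v : X × G, ast u v = (star v.2 u.1 v.1, v.2⁻¹ * u.2 * v.2)) →
      -- (i) z * (ab) = (z * a) * b and z * (y, e) = z
      (∀ (z : X × G) (y : X) (g h : G),
        ast z (y, g * h) = ast (ast z (y, g)) (y, h) ∧ ast z (y, 1) = z) ∧
      -- (ii) self-distributivity
      (∀ z w v : X × G, ast (ast z w) v = ast (ast z v) (ast w v)) ∧
      -- (iii) right translation maps each fiber {x} × G into the single fiber
      -- {x *^h y} × G and is a group homomorphism there
      (∀ (x y : X) (h g₁ g₂ : G),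
        (ast (x, g₁) (y, h)).1 = star h x y ∧
        ast (x, g₁ * g₂) (y, h)
          = (star h x y, (ast (x, g₁) (y, h)).2 * (ast (x, g₂) (y, h)).2)) := by
  intro ast hast
  refine ⟨?_, ?_, ?_⟩
  · intro z y g h
    constructor
    · simp only [hast, h1]
      ext <;> simp <;> group
    · simp only [hast, h2]
      simp
  · intro z w v
    simp only [hast]
    ext
    · simp only []
      rw [h3]
    · simp; group
  · intro x y h g₁ g₂
    constructor
    · simp [hast]
    · simp only [hast]
      ext <;> simp <;> group
end

section
/- Let (X, {*^g}_{g∈G}) be a G-family of racks and N a normal subgroup of G. On X × (G ⋉ N) (where G ⋉ N is the semidirect product with multiplication (g₁,n₁)(g₂,n₂) = (g₁g₂, (g₂⁻¹n₁g₂)n₂)), define (x,(g₁,n₁)) * (y,(g₂,n₂)) = (x *^{g₂n₂} y, ((g₂n₂)⁻¹g₁(g₂n₂), (g₂n₂)⁻¹n₁(g₂n₂))). Then for all z ∈ X × (G ⋉ N), y ∈ X, and (g₁,n₁),(g₂,n₂) ∈ G ⋉ N: z * ((y,(g₁,n₁))(y,(g₂,n₂))) = (z * (y,(g₁,n₁)))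 * (y,(g₂,n₂)), and z * (y,(e,e)) = z. -/
/-- Right conjugate `g⁻¹ n g` of an element of a normal subgroup. -/
def conjN {G : Type*} [Group G] {N : Subgroup G} (hN : N.Normal) (n : N) (g : G) : N :=
  ⟨g⁻¹ * (n : G) * g, hN.conj_mem' n n.2 g⟩

/-- Multiplication of the semidirect product `G ⋉ N`:
`(g₁,n₁)(g₂,n₂) = (g₁g₂, n₁^{g₂} n₂)`. -/
def sdMul {G : Type*} [Group G] {N : Subgroup G} (hN : N.Normal) (p q : G × N) : G × N :=
  (p.1 * q.1, conjN hN p.2 q.1 * q.2)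

/-- The operation on `X × (G ⋉ N)`:
`(x,(g₁,n₁)) * (y,(g₂,n₂)) = (x *^{g₂n₂} y, (g₁^{g₂n₂}, n₁^{g₂n₂}))`. -/
def astXN {G X : Type*} [Group G] {N : Subgroup G} (hN : N.Normal)
    (star : G → X → X → X) (u v : X × (G × N)) : X × (G × N) :=
  (star (v.2.1 * (v.2.2 : G)) u.1 v.1,
    ((v.2.1 * (v.2.2 : G))⁻¹ * u.2.1 * (v.2.1 * (v.2.2 : G)),
      conjN hN u.2.2 (v.2.1 * (v.2.2 : G))))

/-- Axiom (i) for `X × (G ⋉ N)`: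
`z * (ab) = (z * a) * b` for `a, b` in a common fiber, and `z * (y,(e,e)) = z`. -/
theorem astXN_axiom_i
    (G : Type*) [Group G] (X : Type*) (star : G → X → X → X)
    (h1 : ∀ (g h : G) (x y : X), star (g * h) x y = star h (star g x y) y)
    (h2 : ∀ (x y : X), star 1 x y = x)
    (h3 : ∀ (g h : G) (x y z : X),
      star h (star g x y) z = star (h⁻¹ * g * h) (star h x z) (star h y z))
    (N : Subgroup G) (hN : N.Normal) :
    (∀ (z : X × (G × N)) (y : X) (p q : G × N),
      astXN hN star z (y, sdMul hN p q) = astXN hN star (astXN hN star z (y, p)) (y, q)) ∧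
    (∀ (z : X × (G × N)) (y : X), astXN hN star z (y, (1, 1)) = z) := by
  constructor
  · rintro z y p q
    simp only [astXN, sdMul, conjN, Prod.mk.injEq, Prod.ext_iff, Subtype.ext_iff,
      Subgroup.coe_mul, MulMemClass.coe_mul]
    refine ⟨?_, ?_, ?_⟩
    · rw [show p.1 * q.1 * (q.1⁻¹ * ↑p.2 * q.1 * ↑q.2) = (p.1 * ↑p.2) * (q.1 * ↑q.2) by group,
        h1]
    · group
    · group
  · rintro ⟨x, g, n⟩ y
    simp [astXN, conjN, h2]
end

section
/- Let (X, {*^g}_{g∈G}) be a G-family of racks and N ⊴ G. With the operation (x,(g₁,n₁)) * (y,(g₂,n₂)) = (x *^{g₂n₂} y, (g₁^{g₂n₂}, n₁^{g₂n₂})) on X × (G ⋉ N) (where g^h = h⁻¹gh), the self-distributivity law holds: (u * v) * w = (u * w) * (v * w) for all u,v,w ∈ X × (G ⋉ N). -/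
/-- Axiom (ii) for `X × (G ⋉ N)`: self-distributivity
`(u * v) * w = (u * w) * (v * w)`. -/
theorem astXN_self_distrib
    (G : Type*) [Group G] (X : Type*) (star : G → X → X → X)
    (h1 : ∀ (g h : G) (x y : X), star (g * h) x y = star h (star g x y) y)
    (h2 : ∀ (x y : X), star 1 x y = x)
    (h3 : ∀ (g h : G) (x y z : X),
      star h (star g x y) z = star (h⁻¹ * g * h) (star h x z) (star h y z))
    (N : Subgroup G) (hN : N.Normal) :
    ∀ u v w : X × (G × N),
      astXN hN star (astXN hN star u v) w
        = astXN hN star (astXN hN star u w) (astXN hN star v w) := by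
  rintro ⟨x, g, n⟩ ⟨y, a, m⟩ ⟨z, c, k⟩
  simp only [astXN, conjN, Prod.mk.injEq]
  refine ⟨?_, ?_, ?_⟩
  · rw [h3 (a * ↑m) (c * ↑k)]
    congr 1
    group
  · group
  · ext; simp only [MulMemClass.coe_mul]; group
end

section
/- Let (X, {*^g}_{g∈G}) be a G-family of racks and N ⊴ G. With the operation (x,(g₁,n₁)) * (y,(g,n)) = (x *^{gn} y, (g₁^{gn}, n₁^{gn})) and the fiberwise group multiplication (x,(g₁,n₁))(x,(g₂,n₂)) = (x,(g₁g₂, n₁^{g₂}n₂)) on X × (G ⋉ N), right multiplication by any element is a group homomorphism on fibers: for all x,y ∈ X and (g,n),(g₁,n₁),(g₂,n₂) ∈ G ⋉ N, ((x,(g₁,n₁))(x,(g₂,n₂))) * (y,(g,n)) = ((x,(g₁,n₁)) * (y,(g,n))) · ((x,(g₂,n₂)) * (y,(g,n))), and both sides lie in the same fiber {x *^{gn} y} × (G ⋉ N). -/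
/-- Axiom (iii) for `X × (G ⋉ N)`: right multiplication by an
element `(y,(g,n))` maps the fiber `{x} × (G ⋉ N)` into the single fiber
`{x *^{gn} y} × (G ⋉ N)` and is a group homomorphism there. -/
theorem astXN_fiber_hom
    (G : Type*) [Group G] (X : Type*) (star : G → X → X → X)
    (h1 : ∀ (g h : G) (x y : X), star (g * h) x y = star h (star g x y) y)
    (h2 : ∀ (x y : X), star 1 x y = x)
    (h3 : ∀ (g h : G) (x y z : X),
      star h (star g x y) z = star (h⁻¹ * g * h) (star h x z) (star h y z))
    (N : Subgroup G) (hN : N.Normal) :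
    ∀ (x y : X) (q p₁ p₂ : G × N),
      (astXN hN star (x, p₁) (y, q)).1 = star (q.1 * (q.2 : G)) x y ∧
      (astXN hN star (x, p₂) (y, q)).1 = star (q.1 * (q.2 : G)) x y ∧
      astXN hN star (x, sdMul hN p₁ p₂) (y, q)
        = (star (q.1 * (q.2 : G)) x y,
            sdMul hN (astXN hN star (x, p₁) (y, q)).2 (astXN hN star (x, p₂) (y, q)).2) := by
  intro x y q p₁ p₂
  refine ⟨rfl, rfl, ?_⟩
  have : (↑(conjN hN p₁.2 p₂.1 * p₂.2) : G) = p₂.1⁻¹ * p₁.2 * p₂.1 * p₂.2 := rfl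
  ext <;> simp [astXN, sdMul, conjN, this, mul_assoc]
end

section
/- Let (X, {*^g}_{g∈G}) be a G-family of racks and N ⊴ G. Then X × (G ⋉ N), with operations (x,(g₁,n₁)) * (y,(g₂,n₂)) = (x *^{g₂n₂} y, (g₁^{g₂n₂}, n₁^{g₂n₂})) and (x,(g₁,n₁))(x,(g₂,n₂)) = (x,(g₁g₂, n₁^{g₂}n₂)), is a multiple group rack: it satisfies (i) z*(ab) = (z*a)*b and z*(y,(e,e)) = z for a,b in the same fiber; (ii) (u*v)*w = (u*w)*(v*w); (iii) for each fiber and each element w, right multiplication by w maps the fiber into a single fiber and satisfies (ab)*w = (a*w)(b*w). -/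
/-- Theorem 5.1 of the paper: `X × (G ⋉ N)`, with
`(x,(g₁,n₁)) * (y,(g₂,n₂)) = (x *^{g₂n₂} y, (g₁^{g₂n₂}, n₁^{g₂n₂}))` and
fiberwise multiplication `(x,(g₁,n₁))(x,(g₂,n₂)) = (x,(g₁g₂, n₁^{g₂}n₂))`,
is a multiple group rack. -/
theorem astXN_multiple_group_rack
    (G : Type*) [Group G] (X : Type*) (star : G → X → X → X)
    (h1 : ∀ (g h : G) (x y : X), star (g * h) x y = star h (star g x y) y)
    (h2 : ∀ (x y : X), star 1 x y = x)
    (h3 : ∀ (g h : G) (x y z : X),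
      star h (star g x y) z = star (h⁻¹ * g * h) (star h x z) (star h y z))
    (N : Subgroup G) (hN : N.Normal) :
    -- (i)
    (∀ (z : X × (G × N)) (y : X) (p q : G × N),
      astXN hN star z (y, sdMul hN p q) = astXN hN star (astXN hN star z (y, p)) (y, q)) ∧
    (∀ (z : X × (G × N)) (y : X), astXN hN star z (y, (1, 1)) = z) ∧
    -- (ii)
    (∀ u v w : X × (G × N),
      astXN hN star (astXN hN star u v) w
        = astXN hN star (astXN hN star u w) (astXN hN star v w)) ∧
    -- (iii)
    (∀ (x y : X) (q p₁ p₂ : G × N),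
      (astXN hN star (x, p₁) (y, q)).1 = star (q.1 * (q.2 : G)) x y ∧
      astXN hN star (x, sdMul hN p₁ p₂) (y, q)
        = (star (q.1 * (q.2 : G)) x y,
            sdMul hN (astXN hN star (x, p₁) (y, q)).2 (astXN hN star (x, p₂) (y, q)).2)) := by
  refine ⟨?_, ?_, ?_, ?_⟩
  · intro z y p q
    refine Prod.ext ?_ (Prod.ext ?_ (Subtype.ext ?_))
    · show star ((sdMul hN p q).1 * ((sdMul hN p q).2 : G)) z.1 y = _
      have : (sdMul hN p q).1 * ((sdMul hN p q).2 : G)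
          = (p.1 * (p.2 : G)) * (q.1 * (q.2 : G)) := by
        simp [sdMul, conjN]; group
      rw [this, h1]
      rfl
    · simp [astXN, sdMul, conjN]; group
    · simp [astXN, sdMul, conjN]; group
  · intro z y
    simp [astXN, conjN, h2]
  · intro u v w
    refine Prod.ext ?_ (Prod.ext ?_ (Subtype.ext ?_))
    · show star (w.2.1 * (w.2.2 : G)) (star (v.2.1 * (v.2.2 : G)) u.1 v.1) w.1 = _
      rw [h3]
      have : ((astXN hN star v w).2.1 * ((astXN hN star v w).2.2 : G))
          = (w.2.1 * (w.2.2 : G))⁻¹ * (v.2.1 * (v.2.2 : G)) * (w.2.1 * (w.2.2 : G)) := by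
        simp [astXN, conjN]; group
      rw [show (astXN hN star (astXN hN star u w) (astXN hN star v w)).1
          = star ((astXN hN star v w).2.1 * ((astXN hN star v w).2.2 : G))
              (astXN hN star u w).1 (astXN hN star v w).1 from rfl, this]
      rfl
    · simp [astXN, conjN]; group
    · simp [astXN, conjN]; group
  · intro x y q p₁ p₂
    refine ⟨rfl, Prod.ext rfl (Prod.ext ?_ (Subtype.ext ?_))⟩
    · simp [astXN, sdMul, conjN]; group
    · simp [astXN, sdMul, conjN]; group
end
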